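/- For z ∈ 𝔻 define P(z) = (2+z)/(1−z) − z̄/(1−|z|²). Then sup_{z∈𝔻}(1−|z|²)|P(z)| = 5. -/

import Mathlib

open Complex Metric Set

def unitDisk : Set ℂ := Metric.ball 0 1

theorem ub_aux (z : ℂ) (hz : ‖z‖ < 1) :
    (1 - ‖z‖ ^ 2) *
      ‖(2 + z) / (1 - z) - (starRingEnd ℂ) z / ((1 - ‖z‖ ^ 2 : ℝ) : ℂ)‖ ≤ 5 := by
  have hs : ‖z‖ ^ 2 = z.re ^ 2 + z.im ^ 2 := by
    rw [Complex.sq_norm, Complex.normSq_apply]; ring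
  have hslt : z.re ^ 2 + z.im ^ 2 < 1 := by
    rw [← hs]; nlinarith [norm_nonneg z]
  have hz1 : (1 : ℂ) - z ≠ 0 := by
    intro h
    have : z = 1 := by linear_combination -h
    rw [this] at hz; simp at hz
  have hspos : (0:ℝ) < 1 - ‖z‖ ^ 2 := by rw [hs]; linarith
  have hsC : ((1 - ‖z‖ ^ 2 : ℝ) : ℂ) ≠ 0 := by
    exact_mod_cast ne_of_gt hspos
  set N : ℂ := ((1 - ‖z‖ ^ 2 : ℝ) : ℂ) * (2 + z) - (starRingEnd ℂ) z * (1 - z) with hN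
  have key : ((1 - ‖z‖ ^ 2 : ℝ) : ℂ) * ((2 + z) / (1 - z) - (starRingEnd ℂ) z / ((1 - ‖z‖ ^ 2 : ℝ) : ℂ))
      = N / (1 - z) := by
    rw [hN, mul_sub, mul_comm ((1 - ‖z‖ ^ 2 : ℝ) : ℂ) ((starRingEnd ℂ) z / _),
      div_mul_cancel₀ _ hsC, ← mul_div_assoc, div_sub' hz1]
    ring_nf
  have h1 : (1 - ‖z‖ ^ 2) *
      ‖(2 + z) / (1 - z) - (starRingEnd ℂ) z / ((1 - ‖z‖ ^ 2 : ℝ) : ℂ)‖ = ‖N‖ / ‖1 - z‖ := by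
    rw [← norm_div, ← key, norm_mul, Complex.norm_real, Real.norm_eq_abs, abs_of_pos hspos]
  rw [h1, div_le_iff₀ (norm_pos_iff.mpr hz1)]
  have hNsq : ‖N‖ ^ 2 = (2 - (z.re^2+z.im^2)*(1+z.re))^2 + z.im^2*(2-(z.re^2+z.im^2))^2 := by
    rw [Complex.sq_norm, hN, Complex.normSq_apply]
    simp only [Complex.sub_re, Complex.sub_im, Complex.mul_re, Complex.mul_im, Complex.add_re,
      Complex.add_im, Complex.one_re, Complex.one_im, Complex.ofReal_re, Complex.ofReal_im,
      Complex.conj_re, Complex.conj_im]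
    norm_num
    rw [Complex.sq_norm, Complex.normSq_apply]
    ring
  have h1z : ‖(1:ℂ) - z‖ ^ 2 = (1-z.re)^2 + z.im^2 := by
    rw [Complex.sq_norm, Complex.normSq_apply]
    simp only [Complex.sub_re, Complex.sub_im, Complex.one_re, Complex.one_im]
    ring
  have hineq : ‖N‖ ^ 2 ≤ 25 * ‖(1:ℂ) - z‖ ^ 2 := by
    rw [hNsq, h1z]
    nlinarith [sq_nonneg z.im, sq_nonneg (1-z.re), sq_nonneg z.re, sq_nonneg (z.re^2+z.im^2),
      sq_nonneg (1-z.re^2-z.im^2), sq_nonneg (z.re+1), sq_nonneg (z.re*z.im),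
      sq_nonneg (z.im*(1-z.re)), mul_nonneg (sq_nonneg z.im) (sq_nonneg (1-z.re))]
  nlinarith [norm_nonneg N, norm_nonneg ((1:ℂ) - z), hineq]

theorem lb_aux (r : ℝ) (h0 : 0 ≤ r) (h1 : r < 1) :
    (1 - ‖(r:ℂ)‖ ^ 2) *
      ‖(2 + (r:ℂ)) / (1 - (r:ℂ)) - (starRingEnd ℂ) (r:ℂ) / ((1 - ‖(r:ℂ)‖ ^ 2 : ℝ) : ℂ)‖
      = r^2 + 2*r + 2 := by
  have hr2 : ‖(r:ℂ)‖ ^ 2 = r ^ 2 := by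
    rw [Complex.norm_real, Real.norm_eq_abs, _root_.sq_abs]
  have hr1 : (1:ℝ) - r ≠ 0 := by linarith
  have hrr : (1:ℝ) - r ^ 2 > 0 := by nlinarith
  have e1 : (2 + (r:ℂ)) / (1 - (r:ℂ)) - (starRingEnd ℂ) (r:ℂ) / ((1 - ‖(r:ℂ)‖ ^ 2 : ℝ) : ℂ)
      = (((2+r)/(1-r) - r/(1-r^2) : ℝ) : ℂ) := by
    rw [hr2, Complex.conj_ofReal]
    push_cast
    ring
  have e2 : (2+r)/(1-r) - r/(1-r^2) = (r^2+2*r+2)/(1-r^2) := by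
    field_simp
    ring
  rw [e1, e2, hr2, Complex.norm_real, Real.norm_eq_abs,
    abs_of_pos (by positivity : (0:ℝ) < (r^2+2*r+2)/(1-r^2))]
  field_simp

theorem preSchwarzian_norm_eq_five :
    sSup {r | ∃ z ∈ unitDisk,
        r = (1 - ‖z‖ ^ 2) *
          ‖(2 + z) / (1 - z) - (starRingEnd ℂ) z / ((1 - ‖z‖ ^ 2 : ℝ) : ℂ)‖} = 5 := by
  set S := {r | ∃ z ∈ unitDisk,
        r = (1 - ‖z‖ ^ 2) *
          ‖(2 + z) / (1 - z) - (starRingEnd ℂ) z / ((1 - ‖z‖ ^ 2 : ℝ) : ℂ)‖} with hS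
  have hmemball : ∀ r : ℝ, 0 ≤ r → r < 1 → (r:ℂ) ∈ unitDisk := by
    intro r h0 h1
    simp only [unitDisk, Metric.mem_ball, dist_zero_right, Complex.norm_real,
      Real.norm_eq_abs]
    rwa [_root_.abs_of_nonneg h0]
  have hmem : ∀ r : ℝ, 0 ≤ r → r < 1 → (r^2 + 2*r + 2) ∈ S := by
    intro r h0 h1
    exact ⟨(r:ℂ), hmemball r h0 h1, (lb_aux r h0 h1).symm⟩
  have hbdd : ∀ x ∈ S, x ≤ 5 := by
    rintro x ⟨z, hz, rfl⟩
    have hz' : ‖z‖ < 1 := by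
      simpa [unitDisk, Metric.mem_ball, dist_zero_right] using hz
    exact ub_aux z hz'
  apply le_antisymm
  · exact Real.sSup_le hbdd (by norm_num)
  · apply le_of_forall_lt
    intro w hw
    rcases le_or_gt w 0 with hw0 | hw0
    · have h2 : (2:ℝ) ∈ S := by
        have := hmem 0 le_rfl one_pos
        norm_num at this
        exact this
      calc w ≤ 0 := hw0
        _ < 2 := by norm_num
        _ ≤ sSup S := le_csSup ⟨5, hbdd⟩ h2
    · set r : ℝ := 1 - (5 - w)/5 with hr
      have h0 : 0 ≤ r := by rw [hr]; nlinarith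
      have h1 : r < 1 := by rw [hr]; nlinarith
      have hval : w < r^2 + 2*r + 2 := by rw [hr]; nlinarith [sq_nonneg (5-w)]
      calc w < r^2 + 2*r + 2 := hval
        _ ≤ sSup S := le_csSup ⟨5, hbdd⟩ (hmem r h0 h1)
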